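/- arXiv:1503.08139 — 3 statements merged into one kernel-verified Lean document; each statement's English description precedes it below -/
import Mathlib

section
/- Define g : [0, ∞) → ℝ by g(x) = (x+1) log₂(x+1) − x log₂ x for x > 0 and g(0) = 0. For every λ ∈ [0, 1], the function x ↦ g(x) − g(λx) is monotone nondecreasing on [0, ∞). -/
/-- The entropy of a bosonic thermal state of mean photon number `x`:
`g(x) = (x+1) log₂(x+1) − x log₂ x` for `x > 0` and `g 0 = 0` (note that
`Real.logb 2 0 = 0`, so the formula also gives `g 0 = 0`). -/
noncomputable def thermalEntropy (x : ℝ) : ℝ :=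
  (x + 1) * Real.logb 2 (x + 1) - x * Real.logb 2 x

open Real Set

lemma thermalEntropy_eq (x : ℝ) :
    thermalEntropy x = ((x + 1) * Real.log (x + 1) - x * Real.log x) / Real.log 2 := by
  unfold thermalEntropy Real.logb
  ring

lemma thermalEntropy_continuous : Continuous thermalEntropy := by
  simp only [funext thermalEntropy_eq]
  exact ((Real.continuous_mul_log.comp (continuous_id.add continuous_const)).sub
    Real.continuous_mul_log).div_const _

lemma thermalEntropy_hasDerivAt {x : ℝ} (hx : 0 < x) :
    HasDerivAt thermalEntropy ((Real.log (x + 1) - Real.log x) / Real.log 2) x := by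
  have h1 : HasDerivAt (fun y : ℝ => (y + 1) * Real.log (y + 1)) (Real.log (x + 1) + 1) x := by
    have := (Real.hasDerivAt_mul_log (x := x + 1) (by positivity)).comp x
      ((hasDerivAt_id x).add_const 1)
    simpa [Function.comp_def] using this
  have h2 : HasDerivAt (fun y : ℝ => y * Real.log y) (Real.log x + 1) x :=
    Real.hasDerivAt_mul_log hx.ne'
  have h := ((h1.sub h2).div_const (Real.log 2))
  have : (Real.log (x + 1) + 1 - (Real.log x + 1)) / Real.log 2
      = (Real.log (x + 1) - Real.log x) / Real.log 2 := by ring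
  rw [this] at h
  exact h.congr_of_eventuallyEq (by filter_upwards with y using thermalEntropy_eq y)

/-- Key inequality: Bernoulli. -/
lemma key_ineq {x lam : ℝ} (hx : 0 < x) (hl : 0 < lam) (hl1 : lam ≤ 1) :
    lam * (Real.log (lam * x + 1) - Real.log (lam * x)) ≤ Real.log (x + 1) - Real.log x := by
  have hlx : 0 < lam * x := by positivity
  have hs : (0:ℝ) < 1 + 1 / (lam * x) := by positivity
  have h1 : Real.log (lam * x + 1) - Real.log (lam * x) = Real.log (1 + 1 / (lam * x)) := by
    rw [← Real.log_div (by positivity) hlx.ne']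
    congr 1; field_simp
  have h2 : Real.log (x + 1) - Real.log x = Real.log (1 + 1 / x) := by
    rw [← Real.log_div (by positivity) hx.ne']
    congr 1; field_simp
  rw [h1, h2]
  have hbern : (1 + 1 / (lam * x)) ^ lam ≤ 1 + 1 / x := by
    have := rpow_one_add_le_one_add_mul_self (s := 1 / (lam * x))
      (le_trans (by norm_num) (by positivity : (0:ℝ) ≤ 1 / (lam * x))) hl.le hl1
    calc (1 + 1 / (lam * x)) ^ lam ≤ 1 + lam * (1 / (lam * x)) := this
      _ = 1 + 1 / x := by field_simp
  calc lam * Real.log (1 + 1 / (lam * x)) = Real.log ((1 + 1 / (lam * x)) ^ lam) :=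
        (Real.log_rpow hs lam).symm
    _ ≤ Real.log (1 + 1 / x) := Real.log_le_log (by positivity) hbern


/-- For every `λ ∈ [0,1]`, the function `x ↦ g(x) − g(λx)` is
monotone nondecreasing on `[0, ∞)`. -/
theorem thermalEntropy_diff_monotone (lam : ℝ) (hlam : lam ∈ Set.Icc (0 : ℝ) 1) :
    MonotoneOn (fun x => thermalEntropy x - thermalEntropy (lam * x)) (Set.Ici (0 : ℝ)) := by
  obtain ⟨hl0, hl1⟩ := hlam
  have hlog2 : (0:ℝ) < Real.log 2 := Real.log_pos one_lt_two
  rcases eq_or_lt_of_le hl0 with h0 | hpos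
  · -- lam = 0: the function is thermalEntropy x - thermalEntropy 0
    subst h0
    simp only [zero_mul]
    apply monotoneOn_of_deriv_nonneg (convex_Ici 0)
      ((thermalEntropy_continuous.continuousOn).sub continuousOn_const)
    · intro x hx
      rw [interior_Ici] at hx
      exact ((thermalEntropy_hasDerivAt hx).sub_const _).differentiableAt.differentiableWithinAt
    · intro x hx
      rw [interior_Ici] at hx
      show 0 ≤ deriv (fun y => thermalEntropy y - thermalEntropy 0) x
      rw [((thermalEntropy_hasDerivAt hx).sub_const _).deriv]
      apply div_nonneg _ hlog2.le
      have := Real.log_le_log hx (by linarith : x ≤ x + 1)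
      linarith
  · have hc2 : Continuous fun x : ℝ => thermalEntropy (lam * x) := by
      exact thermalEntropy_continuous.comp (continuous_const.mul continuous_id)
    have hd : ∀ x : ℝ, 0 < x → HasDerivAt (fun y => thermalEntropy (lam * y))
        (((Real.log (lam * x + 1) - Real.log (lam * x)) / Real.log 2) * lam) x := by
      intro x hx
      have := (thermalEntropy_hasDerivAt (mul_pos hpos hx)).comp x
        ((hasDerivAt_id x).const_mul lam)
      simpa [Function.comp_def] using this
    apply monotoneOn_of_deriv_nonneg (convex_Ici 0)
      (thermalEntropy_continuous.sub hc2).continuousOn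
    · intro x hx
      rw [interior_Ici] at hx
      exact ((thermalEntropy_hasDerivAt hx).sub (hd x hx)).differentiableAt.differentiableWithinAt
    · intro x hx
      rw [interior_Ici] at hx
      rw [((thermalEntropy_hasDerivAt hx).sub (hd x hx)).deriv]
      have := key_ineq hx hpos hl1
      rw [sub_nonneg, div_mul_eq_mul_div, div_le_div_iff_of_pos_right hlog2, mul_comm]
      exact this
end

section
/- Define g : [0, ∞) → ℝ by g(x) = (x+1) log₂(x+1) − x log₂ x for x > 0 and g(0) = 0. For every λ ∈ (0, 1] and every x ≥ 0, g(x) − g(λx) ≤ log₂(1/λ). -/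
private lemma F_antitone : AntitoneOn
    (fun y : ℝ => (y + 1) * Real.log (y + 1) - (y + 1) * Real.log y)
    (Set.Ioi 0) := by
  have hderiv : ∀ y ∈ Set.Ioi (0:ℝ), HasDerivAt
      (fun y : ℝ => (y + 1) * Real.log (y + 1) - (y + 1) * Real.log y)
      (Real.log (y + 1) - Real.log y - 1 / y) y := by
    intro y hy
    have hy0 : (0:ℝ) < y := hy
    have hid : HasDerivAt (fun y : ℝ => y + 1) 1 y := (hasDerivAt_id y).add_const 1
    have h1 : HasDerivAt (fun y : ℝ => (y + 1) * Real.log (y + 1))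
        (1 * Real.log (y + 1) + (y + 1) * (1 / (y + 1))) y :=
      hid.mul (hid.log (by positivity))
    have h2 : HasDerivAt (fun y : ℝ => (y + 1) * Real.log y)
        (1 * Real.log y + (y + 1) * (1 / y)) y :=
      hid.mul ((hasDerivAt_id y).log hy0.ne')
    have := h1.sub h2
    convert this using 1
    iterate 3 rfl
    rw [mul_one_div_cancel (by positivity : y + 1 ≠ 0), mul_one_div, add_div, div_self hy0.ne']
    ring
  apply antitoneOn_of_deriv_nonpos (convex_Ioi 0)
  · exact ContinuousOn.sub
      (ContinuousOn.mul (by fun_prop)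
        (Real.continuousOn_log.comp (by fun_prop)
          (fun y hy => by simp; intro h; linarith [Set.mem_Ioi.mp hy])))
      (ContinuousOn.mul (by fun_prop)
        (Real.continuousOn_log.comp (by fun_prop)
          (fun y hy => (Set.mem_Ioi.mp hy).ne')))
  · exact fun y hy => ((hderiv y (by simpa using hy)).differentiableAt).differentiableWithinAt
  · intro y hy
    rw [interior_Ioi] at hy
    have hy0 : (0:ℝ) < y := hy
    rw [(hderiv y hy).deriv]
    have h := Real.log_le_sub_one_of_pos (x := (y+1)/y) (by positivity)
    rw [Real.log_div (by positivity) hy0.ne'] at h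
    have : (y+1)/y - 1 = 1/y := by field_simp; ring
    linarith [this ▸ h]

/-- For every `λ ∈ (0,1]` and every `x ≥ 0`,
`g(x) − g(λx) ≤ log₂(1/λ)`. -/
theorem thermalEntropy_diff_le (lam : ℝ) (hlam : lam ∈ Set.Ioc (0 : ℝ) 1)
    (x : ℝ) (hx : 0 ≤ x) :
    thermalEntropy x - thermalEntropy (lam * x) ≤ Real.logb 2 (1 / lam) := by
  obtain ⟨hl0, hl1⟩ := hlam
  rcases eq_or_lt_of_le hx with h0 | hx0
  · rw [← h0]
    have h1 : thermalEntropy 0 = 0 := by simp [thermalEntropy]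
    have h2 : thermalEntropy (lam * 0) = 0 := by simp [thermalEntropy]
    rw [h1, h2, sub_zero]
    exact Real.logb_nonneg (by norm_num) (one_le_one_div hl0 hl1)
  · have hb0 : (0:ℝ) < lam * x := by positivity
    have hba : lam * x ≤ x := by nlinarith
    have key := F_antitone (Set.mem_Ioi.mpr hb0) (Set.mem_Ioi.mpr hx0) hba
    simp only at key
    have hlog2 : (0:ℝ) < Real.log 2 := Real.log_pos (by norm_num)
    -- rewrite everything in terms of Real.log
    have hgoal : thermalEntropy x - thermalEntropy (lam * x)
        - Real.logb 2 (1 / lam)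
        = ((x + 1) * Real.log (x + 1) - (x + 1) * Real.log x
          - ((lam * x + 1) * Real.log (lam * x + 1)
            - (lam * x + 1) * Real.log (lam * x))) / Real.log 2 := by
      simp only [thermalEntropy, Real.logb, Real.log_div one_ne_zero hl0.ne',
        Real.log_mul hl0.ne' hx0.ne', Real.log_one]
      field_simp
      ring
    have : thermalEntropy x - thermalEntropy (lam * x)
        - Real.logb 2 (1 / lam) ≤ 0 := by
      rw [hgoal]
      apply div_nonpos_of_nonpos_of_nonneg _ hlog2.le
      linarith
    linarith
end

section
/- For every a ≥ 0, the function x ↦ log₂(1 + a/x) is convex on (0, ∞). -/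
lemma aux_log_convex (a : ℝ) (ha : 0 ≤ a) :
    ConvexOn ℝ (Set.Ioi (0 : ℝ)) (fun x => Real.log (x + a) - Real.log x) := by
  have hint : interior (Set.Ioi (0 : ℝ)) = Set.Ioi 0 := interior_Ioi
  refine convexOn_of_hasDerivWithinAt2_nonneg (convex_Ioi 0)
    (f' := fun x => (x + a)⁻¹ - x⁻¹)
    (f'' := fun x => (x ^ 2)⁻¹ - ((x + a) ^ 2)⁻¹) ?_ ?_ ?_ ?_
  · apply ContinuousOn.sub
    · exact Real.continuousOn_log.comp (by fun_prop) (fun x hx => by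
        simp at hx ⊢; positivity)
    · exact Real.continuousOn_log.mono (fun x hx => by simp at hx ⊢; positivity)
  · rw [hint]
    intro x hx
    simp only [Set.mem_Ioi] at hx
    have h1 : HasDerivAt (fun x : ℝ => Real.log (x + a)) (x + a)⁻¹ x := by
      have := (Real.hasDerivAt_log (by positivity : x + a ≠ 0)).comp x
        ((hasDerivAt_id x).add_const a)
      simpa [Function.comp_def] using this
    have h2 : HasDerivAt Real.log x⁻¹ x := Real.hasDerivAt_log hx.ne'
    exact (h1.sub h2).hasDerivWithinAt
  · rw [hint]
    intro x hx
    simp only [Set.mem_Ioi] at hx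
    have h1 : HasDerivAt (fun x : ℝ => (x + a)⁻¹) (-(((x + a) ^ 2)⁻¹)) x := by
      have := ((hasDerivAt_inv (by positivity : x + a ≠ 0)).comp x
        ((hasDerivAt_id x).add_const a))
      simpa [Function.comp_def] using this
    have h2 : HasDerivAt (fun x : ℝ => x⁻¹) (-((x ^ 2)⁻¹)) x := by
      simpa using hasDerivAt_inv hx.ne'
    have h3 := (h1.sub h2).hasDerivWithinAt (s := Set.Ioi (0:ℝ))
    convert h3 using 1
    · rfl
    · rfl
    · rfl
    ring
  · rw [hint]
    intro x hx
    simp only [Set.mem_Ioi] at hx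
    have h1 : (0:ℝ) < x ^ 2 := by positivity
    have h2 : x ^ 2 ≤ (x + a) ^ 2 := by nlinarith
    simp only [sub_nonneg]
    exact inv_anti₀ h1 h2

/-- For every `a ≥ 0`, the function `x ↦ log₂(1 + a/x)` is convex
on `(0, ∞)`. -/
theorem logb_one_add_div_convexOn (a : ℝ) (ha : 0 ≤ a) :
    ConvexOn ℝ (Set.Ioi (0 : ℝ)) (fun x => Real.logb 2 (1 + a / x)) := by
  have h := (aux_log_convex a ha).smul (c := (Real.log 2)⁻¹)
    (by positivity)
  refine h.congr fun x hx => ?_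
  simp only [Set.mem_Ioi] at hx
  have hx0 : x ≠ 0 := hx.ne'
  have : 1 + a / x = (x + a) / x := by field_simp
  rw [Real.logb, this, Real.log_div (by positivity) hx0]
  simp [smul_eq_mul, div_eq_inv_mul]
end
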